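/- arXiv:1407.3910 — 3 statements merged into one kernel-verified Lean document; each statement's English description precedes it below -/
import Mathlib

section
/- Let Φ be a closed convex set in ℝᵐ and let P(x) denote the projection of x onto Φ. If x(t) is a continuously differentiable trajectory satisfying, for all t ≥ 1, the Blackwell condition (x(t) − P(x(t)))ᵀ (x(t) − P(x(t)) + t·x′(t)) ≤ 0, then dist(x(t), Φ)² ≤ dist(x(1), Φ)²/t² for all t ≥ 1; in particular dist(x(t), Φ) → 0 as t → ∞. -/
open scoped RealInnerProductSpace

/-- Continuous-time Blackwell approachability principle. -/
theorem blackwell_approachability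
    {m : ℕ} (Φ : Set (EuclideanSpace ℝ (Fin m)))
    (hne : Φ.Nonempty) (hcl : IsClosed Φ) (hconv : Convex ℝ Φ)
    (P : EuclideanSpace ℝ (Fin m) → EuclideanSpace ℝ (Fin m))
    (hPmem : ∀ x, P x ∈ Φ)
    (hPproj : ∀ x, ∀ z ∈ Φ, dist x (P x) ≤ dist x z)
    (x x' : ℝ → EuclideanSpace ℝ (Fin m))
    (hderiv : ∀ t ≥ (1 : ℝ), HasDerivAt x (x' t) t)
    (hcont : Continuous x')
    (hB : ∀ t ≥ (1 : ℝ), ⟪x t - P (x t), (x t - P (x t)) + t • x' t⟫ ≤ 0) :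
    (∀ t ≥ (1 : ℝ), (Metric.infDist (x t) Φ) ^ 2 ≤ (Metric.infDist (x 1) Φ) ^ 2 / t ^ 2) ∧
    Filter.Tendsto (fun t => Metric.infDist (x t) Φ) Filter.atTop (nhds 0) := by
  -- infDist equals distance to the projection
  have hinf : ∀ y, Metric.infDist y Φ = ‖y - P y‖ := by
    intro y
    refine le_antisymm (by simpa [dist_eq_norm] using Metric.infDist_le_dist_of_mem (hPmem y)) ?_
    rw [← dist_eq_norm]
    by_contra h
    push_neg at h
    obtain ⟨z, hz, hzlt⟩ := (Metric.infDist_lt_iff hne).1 h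
    exact absurd (hPproj y z hz) (not_le.2 hzlt)
  set g : ℝ → ℝ := fun t => t ^ 2 * (Metric.infDist (x t) Φ) ^ 2 with hg
  -- g t ≤ g 1 for t ≥ 1
  have key : ∀ b ≥ (1 : ℝ), g b ≤ g 1 := by
    intro b hb
    have hxcont : ContinuousOn x (Set.Icc 1 b) := fun t ht =>
      ((hderiv t ht.1).continuousAt).continuousWithinAt
    have hgcont : ContinuousOn g (Set.Icc 1 b) :=
      (continuousOn_pow 2).mul
        (((Metric.continuous_infDist_pt Φ).comp_continuousOn hxcont).pow 2)
    have bound : ∀ t ∈ Set.Ico (1 : ℝ) b, ∀ r : ℝ, (0 : ℝ) < r →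
        ∃ᶠ z in nhdsWithin t (Set.Ioi t), slope g t z < r := by
      intro t ht r hr
      have ht1 : (1 : ℝ) ≤ t := ht.1
      have htpos : (0 : ℝ) < t := lt_of_lt_of_le zero_lt_one ht1
      set p := P (x t) with hp
      set h : ℝ → ℝ := fun z => z ^ 2 * ⟪x z - p, x z - p⟫ with hhdef
      have hxv : HasDerivAt (fun z => x z - p) (x' t) t := (hderiv t ht1).sub_const p
      have hin : HasDerivAt (fun z => ⟪x z - p, x z - p⟫)
          (⟪x t - p, x' t⟫ + ⟪x' t, x t - p⟫) t := hxv.inner ℝ hxv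
      have hsq : HasDerivAt (fun z : ℝ => z ^ 2) (2 * t) t := by
        simpa using hasDerivAt_pow 2 t
      have hh : HasDerivAt h
          (2 * t * ⟪x t - p, x t - p⟫ + t ^ 2 * (⟪x t - p, x' t⟫ + ⟪x' t, x t - p⟫)) t :=
        hsq.mul hin
      have hDle : 2 * t * ⟪x t - p, x t - p⟫ + t ^ 2 * (⟪x t - p, x' t⟫ + ⟪x' t, x t - p⟫)
          ≤ 0 := by
        have hD : 2 * t * ⟪x t - p, x t - p⟫ + t ^ 2 * (⟪x t - p, x' t⟫ + ⟪x' t, x t - p⟫)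
            = 2 * t * ⟪x t - p, (x t - p) + t • x' t⟫ := by
          rw [inner_add_right, real_inner_smul_right, real_inner_comm (x' t) (x t - p)]
          ring
        rw [hD]
        exact mul_nonpos_of_nonneg_of_nonpos (by linarith) (hB t ht1)
      have hslope : Filter.Tendsto (slope h t) (nhdsWithin t {t}ᶜ)
          (nhds (2 * t * ⟪x t - p, x t - p⟫ + t ^ 2 * (⟪x t - p, x' t⟫ + ⟪x' t, x t - p⟫))) :=
        hasDerivAt_iff_tendsto_slope.1 hh
      have hslope' : ∀ᶠ z in nhdsWithin t (Set.Ioi t), slope h t z < r := by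
        have hmono : nhdsWithin t (Set.Ioi t) ≤ nhdsWithin t {t}ᶜ :=
          nhdsWithin_mono t fun z hz => ne_of_gt hz
        exact hmono (hslope (Iio_mem_nhds (lt_of_le_of_lt hDle hr)))
      have hgh : ∀ z, g z ≤ h z := by
        intro z
        have h1 : Metric.infDist (x z) Φ ≤ ‖x z - p‖ := by
          simpa [dist_eq_norm] using Metric.infDist_le_dist_of_mem (hPmem (x t))
        have h2 : (Metric.infDist (x z) Φ) ^ 2 ≤ ‖x z - p‖ ^ 2 :=
          pow_le_pow_left₀ Metric.infDist_nonneg h1 2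
        have h3 : ⟪x z - p, x z - p⟫ = ‖x z - p‖ ^ 2 := real_inner_self_eq_norm_sq _
        calc g z = z ^ 2 * (Metric.infDist (x z) Φ) ^ 2 := rfl
          _ ≤ z ^ 2 * ‖x z - p‖ ^ 2 := mul_le_mul_of_nonneg_left h2 (sq_nonneg z)
          _ = h z := by rw [hhdef]; simp only [h3]
      have hgt : g t = h t := by
        have : ⟪x t - p, x t - p⟫ = ‖x t - p‖ ^ 2 := real_inner_self_eq_norm_sq _
        calc g t = t ^ 2 * (Metric.infDist (x t) Φ) ^ 2 := rfl
          _ = t ^ 2 * ‖x t - p‖ ^ 2 := by rw [hinf (x t)]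
          _ = h t := by rw [hhdef]; simp only [this]
      have hmem : ∀ᶠ z in nhdsWithin t (Set.Ioi t), z ∈ Set.Ioi t :=
        eventually_mem_nhdsWithin
      refine ((hslope'.and hmem).mono ?_).frequently
      rintro z ⟨hzr, hzt⟩
      have hzgt : t < z := hzt
      have hle : slope g t z ≤ slope h t z := by
        rw [slope_def_field, slope_def_field]
        have hpos : (0:ℝ) < z - t := sub_pos.2 hzgt
        have : g z - g t ≤ h z - h t := by linarith [hgh z, hgt.le]
        gcongr
      exact lt_of_le_of_lt hle hzr
    exact image_le_of_liminf_slope_right_le_deriv_boundary (B := fun _ => g 1)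
      (B' := fun _ => 0) hgcont le_rfl continuousOn_const
      (fun t _ => hasDerivWithinAt_const t _ (g 1)) bound (Set.right_mem_Icc.2 hb)
  -- first conclusion
  have main : ∀ t ≥ (1 : ℝ), (Metric.infDist (x t) Φ) ^ 2 ≤ (Metric.infDist (x 1) Φ) ^ 2 / t ^ 2 := by
    intro t ht
    have htpos : (0 : ℝ) < t ^ 2 := by positivity
    rw [ge_iff_le, le_div_iff₀ htpos] at *
    have := key t ht
    have hg1 : g 1 = (Metric.infDist (x 1) Φ) ^ 2 := by simp [hg]
    have hgt : g t = t ^ 2 * (Metric.infDist (x t) Φ) ^ 2 := rfl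
    nlinarith [this]
  refine ⟨main, ?_⟩
  -- convergence to 0
  have hbound : ∀ t ≥ (1 : ℝ), Metric.infDist (x t) Φ ≤ Metric.infDist (x 1) Φ / t := by
    intro t ht
    have htpos : (0 : ℝ) < t := lt_of_lt_of_le zero_lt_one ht
    have h1 := main t ht
    have h2 : (Metric.infDist (x 1) Φ) ^ 2 / t ^ 2 = (Metric.infDist (x 1) Φ / t) ^ 2 := by
      rw [div_pow]
    rw [h2] at h1
    have hnn : (0 : ℝ) ≤ Metric.infDist (x 1) Φ / t :=
      div_nonneg Metric.infDist_nonneg htpos.le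
    exact (pow_le_pow_iff_left₀ Metric.infDist_nonneg hnn two_ne_zero).1 h1
  have hlim : Filter.Tendsto (fun t : ℝ => Metric.infDist (x 1) Φ / t) Filter.atTop (nhds 0) :=
    Filter.Tendsto.div_atTop tendsto_const_nhds Filter.tendsto_id
  refine tendsto_of_tendsto_of_tendsto_of_le_of_le' tendsto_const_nhds hlim ?_ ?_
  · exact Filter.Eventually.of_forall fun t => Metric.infDist_nonneg
  · filter_upwards [Filter.eventually_ge_atTop (1 : ℝ)] with t ht using hbound t ht
end

section
/- Fix a target y ∈ ℝᵐ, a finite action set A, q ∈ Δ(A), and u(l,q) = Σ_k q_k M(l,k) with y in the convex hull of {u(l,q) : l ∈ A}. Suppose x : [0,∞) → ℝᵐ is differentiable and satisfies x′(s) = u(σ(x(s)), q) − x(s) where σ is any measurable strategy with ⟨x − y, u(σ(x), q) − y⟩ ≤ 0 for all x. Then ‖x(s) − y‖ ≤ e^{−s}·‖x(0) − y‖ for all s ≥ 0. -/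
open scoped RealInnerProductSpace

/-- Rescaled microscopic dynamics: exponential convergence of the average payoff
to the target under the supporting-hyperplane feedback strategy. -/
theorem microscopic_dynamics_converges
    {m : ℕ} (A : Type*) [Fintype A] [Nonempty A]
    (q : A → ℝ) (hq : q ∈ stdSimplex ℝ A)
    (M : A → A → EuclideanSpace ℝ (Fin m))
    (u : A → EuclideanSpace ℝ (Fin m)) (hu : ∀ l, u l = ∑ k, q k • M l k)
    (y : EuclideanSpace ℝ (Fin m)) (hy : y ∈ convexHull ℝ (Set.range u))
    (σ : EuclideanSpace ℝ (Fin m) → A)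
    (hσ : ∀ x : EuclideanSpace ℝ (Fin m), ⟪x - y, u (σ x) - y⟫ ≤ 0)
    (x : ℝ → EuclideanSpace ℝ (Fin m))
    (hx : ∀ s ≥ (0 : ℝ), HasDerivAt x (u (σ (x s)) - x s) s) :
    ∀ s ≥ (0 : ℝ), ‖x s - y‖ ≤ Real.exp (-s) * ‖x 0 - y‖ := by
  set f : ℝ → ℝ := fun s => Real.exp (2 * s) * ⟪x s - y, x s - y⟫ with hf
  have hderiv : ∀ s ∈ Set.Ici (0:ℝ), HasDerivAt f
      (Real.exp (2 * s) * (2 * ⟪x s - y, x s - y⟫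
        + 2 * ⟪x s - y, u (σ (x s)) - x s⟫)) s := by
    intro s hs
    have hxy : HasDerivAt (fun t => x t - y) (u (σ (x s)) - x s) s :=
      (hx s hs).sub_const y
    have hin : HasDerivAt (fun t => ⟪x t - y, x t - y⟫)
        (⟪x s - y, u (σ (x s)) - x s⟫ + ⟪u (σ (x s)) - x s, x s - y⟫) s :=
      hxy.inner ℝ hxy
    have hexp : HasDerivAt (fun t => Real.exp (2 * t)) (Real.exp (2 * s) * 2) s := by
      convert ((hasDerivAt_id s).const_mul 2).exp using 1 <;> simp
    have := hexp.mul hin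
    refine this.congr_deriv ?_
    rw [real_inner_comm (u (σ (x s)) - x s) (x s - y)]
    ring
  have hneg : ∀ s ∈ Set.Ici (0:ℝ),
      Real.exp (2 * s) * (2 * ⟪x s - y, x s - y⟫
        + 2 * ⟪x s - y, u (σ (x s)) - x s⟫) ≤ 0 := by
    intro s _
    have key : ⟪x s - y, u (σ (x s)) - x s⟫
        = ⟪x s - y, u (σ (x s)) - y⟫ - ⟪x s - y, x s - y⟫ := by
      rw [← inner_sub_right]; congr 1; abel
    have h1 := hσ (x s)
    have : 2 * ⟪x s - y, x s - y⟫ + 2 * ⟪x s - y, u (σ (x s)) - x s⟫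
        = 2 * ⟪x s - y, u (σ (x s)) - y⟫ := by rw [key]; ring
    rw [this]
    exact mul_nonpos_of_nonneg_of_nonpos (Real.exp_pos _).le (by linarith)
  have hcont : ContinuousOn f (Set.Ici 0) := fun s hs =>
    ((hderiv s hs).continuousAt).continuousWithinAt
  have hanti : AntitoneOn f (Set.Ici 0) := by
    apply antitoneOn_of_deriv_nonpos (convex_Ici 0) hcont
    · intro s hs
      rw [interior_Ici] at hs
      exact ((hderiv s (Set.Ioi_subset_Ici_self hs)).differentiableAt).differentiableWithinAt
    · intro s hs
      rw [interior_Ici] at hs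
      rw [(hderiv s (Set.Ioi_subset_Ici_self hs)).deriv]
      exact hneg s (Set.Ioi_subset_Ici_self hs)
  intro s hs
  have hle : f s ≤ f 0 := hanti (Set.self_mem_Ici) hs hs
  have h0 : f 0 = ‖x 0 - y‖ ^ 2 := by
    rw [hf]; simp only []; rw [real_inner_self_eq_norm_sq]; simp
  have hfs : f s = Real.exp (2 * s) * ‖x s - y‖ ^ 2 := by
    rw [hf]; simp only []; rw [real_inner_self_eq_norm_sq]
  have hsq : ‖x s - y‖ ^ 2 ≤ (Real.exp (-s) * ‖x 0 - y‖) ^ 2 := by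
    rw [hfs, h0] at hle
    have hexp : (0:ℝ) < Real.exp (2 * s) := Real.exp_pos _
    rw [mul_pow, ← Real.exp_nat_mul]
    have : Real.exp ((2:ℕ) * (-s)) = (Real.exp (2 * s))⁻¹ := by
      rw [← Real.exp_neg]; ring_nf
    rw [this, inv_mul_eq_div, le_div_iff₀ hexp, mul_comm]
    exact hle
  have h1 : (0:ℝ) ≤ Real.exp (-s) * ‖x 0 - y‖ :=
    mul_nonneg (Real.exp_pos _).le (norm_nonneg _)
  exact (pow_le_pow_iff_left₀ (norm_nonneg _) h1 two_ne_zero).mp hsq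
end

section
/- Let x : [t₀, ∞) → ℝᵐ (t₀ > 0) be differentiable with x′(t) = (1/t)(c(t) − x(t)) where c(t) ∈ ℝᵐ satisfies ⟨x(t) − y, c(t) − y⟩ ≤ 0 for all t. Then t ↦ t·‖x(t) − y‖ is nonincreasing; in particular ‖x(t) − y‖ ≤ (t₀/t)‖x(t₀) − y‖, so x(t) → y as t → ∞. -/
open scoped RealInnerProductSpace

/-- Time-averaged payoff dynamics: `t ↦ t‖x(t)-y‖` is nonincreasing, giving
1st-moment approachability of the singleton target `y` at rate `1/t`. -/
theorem averaged_dynamics_approaches_target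
    {m : ℕ} (t₀ : ℝ) (ht₀ : 0 < t₀) (y : EuclideanSpace ℝ (Fin m))
    (x c : ℝ → EuclideanSpace ℝ (Fin m)) (hc : Continuous c)
    (hx : ∀ t ≥ t₀, HasDerivAt x ((1 / t) • (c t - x t)) t)
    (hH : ∀ t ≥ t₀, ⟪x t - y, c t - y⟫ ≤ 0) :
    (∀ t₁ t₂, t₀ ≤ t₁ → t₁ ≤ t₂ → t₂ * ‖x t₂ - y‖ ≤ t₁ * ‖x t₁ - y‖) ∧
    (∀ t ≥ t₀, ‖x t - y‖ ≤ (t₀ / t) * ‖x t₀ - y‖) ∧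
    Filter.Tendsto x Filter.atTop (nhds y) := by
  set g : ℝ → ℝ := fun t => t ^ 2 * ⟪x t - y, x t - y⟫ with hg
  have hgderiv : ∀ t ≥ t₀, HasDerivAt g (2 * t * ⟪x t - y, c t - y⟫) t := by
    intro t ht
    have htpos : 0 < t := lt_of_lt_of_le ht₀ ht
    have hxd : HasDerivAt (fun s => x s - y) ((1 / t) • (c t - x t)) t :=
      (hx t ht).sub_const y
    have hi : HasDerivAt (fun s => ⟪x s - y, x s - y⟫)
        (⟪x t - y, (1 / t) • (c t - x t)⟫ + ⟪(1 / t) • (c t - x t), x t - y⟫) t :=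
      hxd.inner ℝ hxd
    have ht2 : HasDerivAt (fun s : ℝ => s ^ 2) (2 * t) t := by
      simpa using (hasDerivAt_pow 2 t)
    have := ht2.mul hi
    convert this using 1
    case e'_4 => rfl
    case e'_5 => rfl
    case e'_8 => rfl
    have h1 : ⟪x t - y, (1 / t) • (c t - x t)⟫ = (1 / t) * ⟪x t - y, c t - x t⟫ :=
      real_inner_smul_right _ _ _
    have h2 : ⟪(1 / t) • (c t - x t), x t - y⟫ = (1 / t) * ⟪x t - y, c t - x t⟫ := by
      rw [real_inner_smul_left, real_inner_comm]
    have h3 : ⟪x t - y, c t - x t⟫ = ⟪x t - y, c t - y⟫ - ⟪x t - y, x t - y⟫ := by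
      rw [show c t - x t = (c t - y) - (x t - y) by abel, inner_sub_right]
    rw [h1, h2, h3]
    field_simp
    ring
  have hanti : AntitoneOn g (Set.Ici t₀) := by
    apply antitoneOn_of_deriv_nonpos (convex_Ici t₀)
    · intro t ht
      exact ((hgderiv t ht).continuousAt).continuousWithinAt
    · intro t ht
      rw [interior_Ici] at ht
      exact ((hgderiv t (le_of_lt (Set.mem_Ioi.mp ht))).differentiableAt).differentiableWithinAt
    · intro t ht
      rw [interior_Ici] at ht
      have ht' : t₀ ≤ t := le_of_lt (Set.mem_Ioi.mp ht)
      rw [(hgderiv t ht').deriv]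
      have htpos : 0 < t := lt_of_lt_of_le ht₀ ht'
      have := hH t ht'
      nlinarith
  have hgval : ∀ t, g t = (t * ‖x t - y‖) ^ 2 := by
    intro t
    rw [hg]
    simp only [real_inner_self_eq_norm_sq]
    ring
  have hmain : ∀ t₁ t₂, t₀ ≤ t₁ → t₁ ≤ t₂ → t₂ * ‖x t₂ - y‖ ≤ t₁ * ‖x t₁ - y‖ := by
    intro t₁ t₂ h1 h2
    have := hanti (Set.mem_Ici.mpr h1) (Set.mem_Ici.mpr (h1.trans h2)) h2
    rw [hgval, hgval] at this
    exact le_of_sq_le_sq this (mul_nonneg (ht₀.le.trans h1) (norm_nonneg _))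
  refine ⟨hmain, ?_, ?_⟩
  · intro t ht
    have htpos : 0 < t := lt_of_lt_of_le ht₀ ht
    have := hmain t₀ t le_rfl ht
    rw [div_mul_eq_mul_div, le_div_iff₀ htpos]
    linarith [this]
  · rw [tendsto_iff_dist_tendsto_zero]
    have hb : Filter.Tendsto (fun t : ℝ => (t₀ * ‖x t₀ - y‖) / t) Filter.atTop (nhds 0) :=
      Filter.Tendsto.div_atTop tendsto_const_nhds Filter.tendsto_id
    apply squeeze_zero' (Filter.eventually_atTop.mpr ⟨t₀, fun t _ => dist_nonneg⟩)
      (Filter.eventually_atTop.mpr ⟨t₀, fun t ht => ?_⟩) hb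
    have htpos : 0 < t := lt_of_lt_of_le ht₀ ht
    have := hmain t₀ t le_rfl ht
    rw [dist_eq_norm, le_div_iff₀ htpos]
    linarith [this]
end
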